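/- Let z_1,…,z_n ∈ ℝ^d satisfy 1/2 ≤ ‖z_j‖₂ ≤ 2 for all j, let z̄_j = z_j/‖z_j‖₂, let γ > 0, and fix an index i. Let a_1,…,a_n ∈ ℝ and let w be a random vector distributed according to μ. If μ(W_i) > 0, then the conditional probability satisfies P(‖h(w)‖₂ ≥ |a_i|/4 | w ∈ W_i) ≥ 1/2. -/

import Mathlib

open MeasureTheory ProbabilityTheory Real RealInnerProductSpace

/-- The standard Gaussian measure on `ℝ^d`: the `d`-fold product of `N(0,1)`. -/
noncomputable def stdGaussian (d : ℕ) : Measure (EuclideanSpace ℝ (Fin d)) :=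
  (Measure.pi fun _ : Fin d => gaussianReal 0 1).map
    (MeasurableEquiv.toLp 2 (Fin d → ℝ))

open scoped ENNReal

lemma lintegral_pi_prod : ∀ {m : ℕ} (μ : Fin m → Measure ℝ) [∀ i, SigmaFinite (μ i)]
    (f : Fin m → ℝ → ℝ≥0∞), (∀ i, Measurable (f i)) →
    ∫⁻ x, ∏ i, f i (x i) ∂Measure.pi μ = ∏ i, ∫⁻ x, f i x ∂μ i := by
  intro m
  induction m with
  | zero => intro μ _ f hf; simp
  | succ m ih =>
    intro μ _ f hf
    have hmp := (measurePreserving_piFinSuccAbove μ 0).symm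
    have hF : Measurable fun x : Fin (m+1) → ℝ => ∏ i, f i (x i) :=
      Finset.measurable_prod _ fun i _ => (hf i).comp (measurable_pi_apply i)
    rw [← hmp.lintegral_comp hF]
    have : ∀ y : ℝ × (Fin m → ℝ),
        (∏ i, f i (((MeasurableEquiv.piFinSuccAbove (fun _ => ℝ) 0).symm y) i))
        = f 0 y.1 * ∏ j : Fin m, f j.succ (y.2 j) := by
      intro y
      rw [Fin.prod_univ_succ]
      simp [MeasurableEquiv.piFinSuccAbove_symm_apply, Fin.insertNthEquiv,
        Fin.insertNth_zero, Fin.zero_succAbove]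
    simp_rw [this, Fin.zero_succAbove]
    rw [lintegral_prod_mul (f := f 0) (g := fun b : Fin m → ℝ => ∏ j : Fin m, f j.succ (b j))
      (hf 0).aemeasurable
      (Finset.measurable_prod _ fun j _ => (hf j.succ).comp (measurable_pi_apply j)).aemeasurable,
      ih _ _ (fun j => hf j.succ), Fin.prod_univ_succ]

lemma pi_gaussian_eq {d : ℕ} :
    Measure.pi (fun _ : Fin d => gaussianReal 0 1)
      = (volume : Measure (Fin d → ℝ)).withDensity
          (fun x => ∏ i, gaussianPDF 0 1 (x i)) := by
  refine Measure.pi_eq fun s hs => ?_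
  rw [withDensity_apply _ (MeasurableSet.univ_pi hs), ← lintegral_indicator (MeasurableSet.univ_pi hs)]
  have : ∀ x : Fin d → ℝ, (Set.pi Set.univ s).indicator (fun x => ∏ i, gaussianPDF 0 1 (x i)) x
      = ∏ i, (s i).indicator (gaussianPDF 0 1) (x i) := by
    intro x
    by_cases hx : x ∈ Set.pi Set.univ s
    · rw [Set.indicator_of_mem hx]
      refine Finset.prod_congr rfl fun j _ => ?_
      rw [Set.indicator_of_mem (hx j (Set.mem_univ j))]
    · rw [Set.indicator_of_notMem hx]
      obtain ⟨j, hj⟩ : ∃ j, x j ∉ s j := by simpa [Set.mem_pi] using hx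
      exact (Finset.prod_eq_zero (Finset.mem_univ j) (by rw [Set.indicator_of_notMem hj])).symm
  simp_rw [this]
  rw [volume_pi, lintegral_pi_prod _ _ (fun i => (measurable_gaussianPDF 0 1).indicator (hs i))]
  refine Finset.prod_congr rfl fun j _ => ?_
  rw [gaussianReal_apply 0 one_ne_zero, lintegral_indicator (hs j)]

noncomputable def stdDensity (d : ℕ) (x : EuclideanSpace ℝ (Fin d)) : ℝ≥0∞ :=
  ENNReal.ofReal ((Real.sqrt (2 * π))⁻¹ ^ d * Real.exp (-‖x‖ ^ 2 / 2))

lemma measurable_stdDensity (d : ℕ) : Measurable (stdDensity d) := by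
  have : Continuous fun x : EuclideanSpace ℝ (Fin d) =>
      (Real.sqrt (2 * π))⁻¹ ^ d * Real.exp (-‖x‖ ^ 2 / 2) := by fun_prop
  exact this.measurable.ennreal_ofReal

lemma prod_gaussianPDF_eq {d : ℕ} (x : EuclideanSpace ℝ (Fin d)) :
    (∏ i, gaussianPDF 0 1 (x i)) = stdDensity d x := by
  simp_rw [gaussianPDF]
  rw [← ENNReal.ofReal_prod_of_nonneg (fun i _ => gaussianPDFReal_nonneg 0 1 (x i))]
  congr 1
  simp_rw [gaussianPDFReal]
  rw [Finset.prod_mul_distrib, Finset.prod_const, Finset.card_univ, Fintype.card_fin,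
    ← Real.exp_sum]
  have h2 : ‖x‖ ^ 2 = ∑ i, (x i) ^ 2 := by
    rw [EuclideanSpace.norm_eq, Real.sq_sqrt (Finset.sum_nonneg fun i _ => sq_nonneg _)]
    simp [sq_abs]
  congr 2
  · push_cast
    ring_nf
  · rw [h2]
    push_cast
    rw [← Finset.sum_neg_distrib, Finset.sum_div]
    ring_nf

lemma map_withDensity_equiv {α β : Type*} [MeasurableSpace α] [MeasurableSpace β]
    (e : α ≃ᵐ β) (μ : Measure α) (f : β → ℝ≥0∞) (hf : Measurable f) :
    (μ.withDensity (fun x => f (e x))).map e = (μ.map e).withDensity f := by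
  ext s hs
  rw [Measure.map_apply e.measurable hs, withDensity_apply _ hs,
    withDensity_apply _ (e.measurable hs),
    setLIntegral_map hs hf e.measurable]

lemma stdGaussian_eq (d : ℕ) :
    stdGaussian d
      = (volume : Measure (EuclideanSpace ℝ (Fin d))).withDensity (stdDensity d) := by
  rw [_root_.stdGaussian, pi_gaussian_eq]
  have h : (fun x : Fin d → ℝ => ∏ i, gaussianPDF 0 1 (x i))
      = fun x => stdDensity d ((MeasurableEquiv.toLp 2 (Fin d → ℝ)) x) := by
    funext x
    rw [← prod_gaussianPDF_eq]
    rfl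
  rw [h, map_withDensity_equiv _ _ _ (measurable_stdDensity d),
    MeasurableEquiv.coe_toLp, (PiLp.volume_preserving_toLp (Fin d)).map_eq]

lemma stdGaussian_map_eq {d : ℕ}
    (L : EuclideanSpace ℝ (Fin d) ≃ₗᵢ[ℝ] EuclideanSpace ℝ (Fin d)) :
    (stdGaussian d).map L = stdGaussian d := by
  rw [stdGaussian_eq]
  have he : (⇑L : EuclideanSpace ℝ (Fin d) → EuclideanSpace ℝ (Fin d))
      = ⇑(L.toHomeomorph.toMeasurableEquiv) := rfl
  have hd : stdDensity d = fun x => stdDensity d (L.toHomeomorph.toMeasurableEquiv x) := by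
    funext x
    have : ‖(L.toHomeomorph.toMeasurableEquiv x : EuclideanSpace ℝ (Fin d))‖ = ‖x‖ :=
      L.norm_map x
    simp [stdDensity, this]
  rw [he]
  conv_lhs => rw [hd]
  rw [map_withDensity_equiv _ _ _ (measurable_stdDensity d)]
  rw [← he, L.measurePreserving.map_eq, ← stdGaussian_eq]

lemma stdGaussian_measurePreserving {d : ℕ}
    (L : EuclideanSpace ℝ (Fin d) ≃ₗᵢ[ℝ] EuclideanSpace ℝ (Fin d)) :
    MeasurePreserving L (stdGaussian d) (stdGaussian d) :=
  ⟨L.continuous.measurable, stdGaussian_map_eq L⟩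

instance stdGaussian_isProbabilityMeasure (d : ℕ) :
    IsProbabilityMeasure (stdGaussian d) := by
  rw [_root_.stdGaussian]
  exact Measure.isProbabilityMeasure_map (MeasurableEquiv.measurable _).aemeasurable

lemma stdGaussian_absolutelyContinuous (d : ℕ) :
    stdGaussian d ≪ (volume : Measure (EuclideanSpace ℝ (Fin d))) := by
  rw [stdGaussian_eq]
  exact withDensity_absolutelyContinuous _ _

lemma stdGaussian_hyperplane {d : ℕ} (v : EuclideanSpace ℝ (Fin d)) (hv : v ≠ 0) :
    stdGaussian d {w | ⟪w, v⟫ = 0} = 0 := by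
  refine stdGaussian_absolutelyContinuous d ?_
  have hset : {w : EuclideanSpace ℝ (Fin d) | ⟪w, v⟫ = 0}
      = ((ℝ ∙ v)ᗮ : Submodule ℝ (EuclideanSpace ℝ (Fin d))) := by
    ext w
    simp only [Set.mem_setOf_eq, SetLike.mem_coe,
      Submodule.mem_orthogonal_singleton_iff_inner_right]
    rw [real_inner_comm]
  rw [hset]
  refine Measure.addHaar_submodule _ _ ?_
  intro htop
  have : v ∈ ((ℝ ∙ v)ᗮ : Submodule ℝ (EuclideanSpace ℝ (Fin d))) := htop ▸ Submodule.mem_top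
  have := Submodule.mem_orthogonal_singleton_iff_inner_right.mp this
  exact hv (inner_self_eq_zero.mp this)

noncomputable def reflAt {d : ℕ} (v : EuclideanSpace ℝ (Fin d)) :
    EuclideanSpace ℝ (Fin d) ≃ₗᵢ[ℝ] EuclideanSpace ℝ (Fin d) :=
  (Submodule.reflection (ℝ ∙ v)).trans (LinearIsometryEquiv.neg ℝ)

lemma reflAt_apply {d : ℕ} (v : EuclideanSpace ℝ (Fin d)) (hv : ‖v‖ = 1)
    (w : EuclideanSpace ℝ (Fin d)) :
    reflAt v w = w - (2 * ⟪v, w⟫) • v := by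
  have hneg : ∀ x : EuclideanSpace ℝ (Fin d), (LinearIsometryEquiv.neg ℝ) x = -x :=
    fun _ => rfl
  rw [reflAt, LinearIsometryEquiv.trans_apply, Submodule.reflection_apply,
    Submodule.starProjection_singleton, hv, hneg, neg_sub, two_smul, two_mul, add_smul]
  norm_num


/-- The set `W_i = {w : |⟨w, z̄_i⟩| ≤ γ, and |⟨w − ⟨w, z̄_i⟩ z̄_i, z̄_j⟩| ≥ 2γ for all j ≠ i}`. -/
def sepSet {d n : ℕ} (zbar : Fin n → EuclideanSpace ℝ (Fin d)) (γ : ℝ) (i : Fin n) :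
    Set (EuclideanSpace ℝ (Fin d)) :=
  {w | |⟪w, zbar i⟫| ≤ γ ∧ ∀ j, j ≠ i → 2 * γ ≤ |⟪w - ⟪w, zbar i⟫ • zbar i, zbar j⟫|}

/-- `h(w) = Σ_j a_j · 1{⟨w, z_j⟩ ≥ 0} · z_j`, the ReLU-gradient sum. -/
noncomputable def reluSum {d n : ℕ} (a : Fin n → ℝ) (z : Fin n → EuclideanSpace ℝ (Fin d))
    (w : EuclideanSpace ℝ (Fin d)) : EuclideanSpace ℝ (Fin d) :=
  ∑ j, (a j * if 0 ≤ ⟪w, z j⟫ then 1 else 0) • z j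

/-- For `z_1, …, z_n` with `1/2 ≤ ‖z_j‖ ≤ 2`, `z̄_j = z_j / ‖z_j‖`, `γ > 0` and a fixed
index `i` with `μ(W_i) > 0`, a standard Gaussian vector `w` satisfies
`P(‖h(w)‖ ≥ |a_i|/4 ∣ w ∈ W_i) ≥ 1/2`. -/
theorem cond_reluSum_lower {d n : ℕ} (z : Fin n → EuclideanSpace ℝ (Fin d))
    (hz : ∀ j, 1 / 2 ≤ ‖z j‖ ∧ ‖z j‖ ≤ 2)
    (zbar : Fin n → EuclideanSpace ℝ (Fin d)) (hzbar : ∀ j, zbar j = ‖z j‖⁻¹ • z j)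
    (γ : ℝ) (hγ : 0 < γ) (i : Fin n) (a : Fin n → ℝ)
    (hpos : 0 < stdGaussian d (sepSet zbar γ i)) :
    1 / 2 ≤ (stdGaussian d)[|sepSet zbar γ i] {w | |a i| / 4 ≤ ‖reluSum a z w‖} := by
  classical
  have hnj : ∀ j, (0:ℝ) < ‖z j‖ := fun j => lt_of_lt_of_le (by norm_num) (hz j).1
  have hnorm1 : ∀ j, ‖zbar j‖ = 1 := by
    intro j
    rw [hzbar j, norm_smul, norm_inv, norm_norm, inv_mul_cancel₀ (hnj j).ne']
  have hzi : z i ≠ 0 := fun h => by simpa [h] using hnj i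
  set σ := fun w : EuclideanSpace ℝ (Fin d) => w - (2 * ⟪zbar i, w⟫) • zbar i with hσdef
  -- basic inner product identities
  have hF0 : ∀ (w : EuclideanSpace ℝ (Fin d)) (j), ⟪w, z j⟫ = ‖z j‖ * ⟪w, zbar j⟫ := by
    intro w j
    rw [hzbar j, real_inner_smul_right, ← mul_assoc, mul_inv_cancel₀ (hnj j).ne', one_mul]
  have hvv : ⟪zbar i, zbar i⟫ = 1 := by
    rw [real_inner_self_eq_norm_sq, hnorm1 i, one_pow]
  have hF1 : ∀ w, ⟪σ w, zbar i⟫ = -⟪w, zbar i⟫ := by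
    intro w
    simp only [hσdef, inner_sub_left, real_inner_smul_left, hvv, real_inner_comm (zbar i) w]
    ring
  have hF2 : ∀ w, σ w - ⟪σ w, zbar i⟫ • zbar i = w - ⟪w, zbar i⟫ • zbar i := by
    intro w
    rw [hF1 w]
    simp only [hσdef, real_inner_comm (zbar i) w]
    module
  have hF3 : ∀ w ∈ sepSet zbar γ i, σ w ∈ sepSet zbar γ i := by
    intro w hw
    obtain ⟨h1, h2⟩ := hw
    refine ⟨?_, ?_⟩
    · rw [hF1 w, abs_neg]; exact h1
    · intro j hj
      rw [hF2 w]
      exact h2 j hj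
  have hF4 : ∀ w ∈ sepSet zbar γ i, ∀ j, j ≠ i → (0 ≤ ⟪w, z j⟫ ↔ 0 ≤ ⟪σ w, z j⟫) := by
    intro w hw j hj
    obtain ⟨h1, h2⟩ := hw
    set t := ⟪w - ⟪w, zbar i⟫ • zbar i, zbar j⟫ with ht
    have htabs : 2 * γ ≤ |t| := h2 j hj
    have hwj : ⟪w, zbar j⟫ = t + ⟪w, zbar i⟫ * ⟪zbar i, zbar j⟫ := by
      rw [ht, inner_sub_left, real_inner_smul_left]; ring
    have hσwj : ⟪σ w, zbar j⟫ = t - ⟪w, zbar i⟫ * ⟪zbar i, zbar j⟫ := by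
      simp only [hσdef, inner_sub_left, real_inner_smul_left, real_inner_comm (zbar i) w]
      rw [hwj, real_inner_comm (zbar i) w]; ring
    have hsmall : |⟪w, zbar i⟫ * ⟪zbar i, zbar j⟫| ≤ γ := by
      rw [abs_mul]
      calc |⟪w, zbar i⟫| * |⟪zbar i, zbar j⟫| ≤ γ * 1 := by
            refine mul_le_mul h1 ?_ (abs_nonneg _) hγ.le
            have := abs_real_inner_le_norm (zbar i) (zbar j)
            rwa [hnorm1 i, hnorm1 j, one_mul] at this
        _ = γ := mul_one γ
    obtain ⟨hs1, hs2⟩ := abs_le.mp hsmall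
    have hiff : (0 ≤ ⟪w, zbar j⟫ ↔ 0 ≤ ⟪σ w, zbar j⟫) := by
      rcases le_abs.mp htabs with hcase | hcase
      · exact iff_of_true (by rw [hwj]; linarith) (by rw [hσwj]; linarith)
      · exact iff_of_false (by rw [hwj]; intro h; linarith)
          (by rw [hσwj]; intro h; linarith)
    rw [hF0 w j, hF0 (σ w) j, mul_nonneg_iff_of_pos_left (hnj j),
      mul_nonneg_iff_of_pos_left (hnj j)]
    exact hiff
  have hσi : ∀ w, ⟪σ w, z i⟫ = -⟪w, z i⟫ := by
    intro w
    rw [hF0 (σ w) i, hF0 w i, hF1 w]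
    ring
  have hF5 : ∀ w ∈ sepSet zbar γ i, ⟪w, z i⟫ ≠ 0 →
      |a i| / 4 ≤ ‖reluSum a z w‖ ∨ |a i| / 4 ≤ ‖reluSum a z (σ w)‖ := by
    intro w hw hne
    have hdiff : reluSum a z w - reluSum a z (σ w)
        = ((a i * if 0 ≤ ⟪w, z i⟫ then 1 else 0)
            - (a i * if 0 ≤ ⟪σ w, z i⟫ then 1 else 0)) • z i := by
      rw [reluSum, reluSum, ← Finset.sum_sub_distrib, Finset.sum_eq_single i]
      · rw [sub_smul]
      · intro j _ hj
        simp only [hF4 w hw j hj, sub_self, zero_smul]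
      · intro h; exact absurd (Finset.mem_univ i) h
    have hnd : ‖reluSum a z w - reluSum a z (σ w)‖ = |a i| * ‖z i‖ := by
      rcases lt_or_gt_of_ne hne with hlt | hgt
      · rw [hdiff, if_neg (not_le.mpr hlt), if_pos (by rw [hσi]; linarith), norm_smul]
        simp [abs_neg]
      · rw [hdiff, if_pos hgt.le, if_neg (by rw [hσi]; push_neg; linarith), norm_smul]
        simp
    by_contra hcon
    push_neg at hcon
    obtain ⟨hc1, hc2⟩ := hcon
    have hle := norm_sub_le (reluSum a z w) (reluSum a z (σ w))
    nlinarith [hnd, hle, (hz i).1, abs_nonneg (a i)]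
  -- measurability
  have hWmeas : MeasurableSet (sepSet zbar γ i) := by
    have hc1 : Continuous fun w : EuclideanSpace ℝ (Fin d) => |⟪w, zbar i⟫| :=
      (continuous_id.inner continuous_const).abs
    have hc2 : ∀ j : Fin n, Continuous fun w : EuclideanSpace ℝ (Fin d) =>
        |⟪w - ⟪w, zbar i⟫ • zbar i, zbar j⟫| := fun j =>
      by fun_prop
    have heq : sepSet zbar γ i = {w | |⟪w, zbar i⟫| ≤ γ}
        ∩ ⋂ (j : Fin n), ⋂ (_ : j ≠ i),
          {w | 2 * γ ≤ |⟪w - ⟪w, zbar i⟫ • zbar i, zbar j⟫|} := by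
      ext w
      simp [sepSet, Set.mem_iInter]
    rw [heq]
    exact (measurableSet_le hc1.measurable measurable_const).inter
      (MeasurableSet.iInter fun j => MeasurableSet.iInter fun _ =>
        measurableSet_le measurable_const (hc2 j).measurable)
  have hrelu_meas : Measurable (reluSum a z) := by
    apply Finset.measurable_sum
    intro j _
    have hset : MeasurableSet {w : EuclideanSpace ℝ (Fin d) | 0 ≤ ⟪w, z j⟫} :=
      measurableSet_le measurable_const (continuous_id.inner continuous_const).measurable
    exact (measurable_const.mul (Measurable.ite hset measurable_const
      measurable_const)).smul_const _
  have hAmeas : MeasurableSet {w : EuclideanSpace ℝ (Fin d) | |a i| / 4 ≤ ‖reluSum a z w‖} :=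
    measurableSet_le measurable_const hrelu_meas.norm
  -- measure preserving reflection
  have hσmp : MeasurePreserving σ (stdGaussian d) (stdGaussian d) := by
    have h := stdGaussian_measurePreserving (reflAt (zbar i))
    have hcoe : ⇑(reflAt (zbar i)) = σ := funext fun w => reflAt_apply _ (hnorm1 i) w
    rwa [hcoe] at h
  set μ := stdGaussian d with hμdef
  set W := sepSet zbar γ i with hWdef
  set A := {w : EuclideanSpace ℝ (Fin d) | |a i| / 4 ≤ ‖reluSum a z w‖} with hAdef
  set N := {w : EuclideanSpace ℝ (Fin d) | ⟪w, z i⟫ = 0} with hNdef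
  have hNnull : μ N = 0 := stdGaussian_hyperplane _ hzi
  have hsub : W \ (A ∪ N) ⊆ σ ⁻¹' (W ∩ A) := by
    intro w hw
    obtain ⟨hwW, hwn⟩ := hw
    have hwA : w ∉ A := fun h => hwn (Or.inl h)
    have hwN : ⟪w, z i⟫ ≠ 0 := fun h => hwn (Or.inr h)
    rcases hF5 w hwW hwN with h | h
    · exact absurd h hwA
    · exact ⟨hF3 w hwW, h⟩
  have hcover : W ⊆ (W ∩ A) ∪ ((W \ (A ∪ N)) ∪ N) := by
    intro w hw
    by_cases hA : w ∈ A
    · exact Or.inl ⟨hw, hA⟩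
    by_cases hN : w ∈ N
    · exact Or.inr (Or.inr hN)
    · exact Or.inr (Or.inl ⟨hw, fun h => h.elim hA hN⟩)
  have hkey : μ W ≤ 2 * μ (W ∩ A) := by
    have h1 : μ W ≤ μ (W ∩ A) + (μ (W \ (A ∪ N)) + μ N) :=
      le_trans (measure_mono hcover) (le_trans (measure_union_le _ _)
        (add_le_add le_rfl (measure_union_le _ _)))
    have h2 : μ (W \ (A ∪ N)) ≤ μ (W ∩ A) := by
      calc μ (W \ (A ∪ N)) ≤ μ (σ ⁻¹' (W ∩ A)) := measure_mono hsub
        _ = μ (W ∩ A) := hσmp.measure_preimage (hWmeas.inter hAmeas).nullMeasurableSet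
    calc μ W ≤ μ (W ∩ A) + (μ (W \ (A ∪ N)) + μ N) := h1
      _ = μ (W ∩ A) + μ (W \ (A ∪ N)) := by rw [hNnull, add_zero]
      _ ≤ μ (W ∩ A) + μ (W ∩ A) := add_le_add le_rfl h2
      _ = 2 * μ (W ∩ A) := (two_mul _).symm
  rw [cond_apply hWmeas]
  rw [← ENNReal.div_eq_inv_mul]
  rw [ENNReal.le_div_iff_mul_le (Or.inl hpos.ne') (Or.inl (measure_ne_top μ W))]
  have : (1 / 2 : ℝ≥0∞) * μ W ≤ (1 / 2) * (2 * μ (W ∩ A)) := mul_le_mul_right hkey _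
  rwa [← mul_assoc, show (1 / 2 : ℝ≥0∞) * 2 = 1 by
    rw [one_div, ENNReal.inv_mul_cancel two_ne_zero ENNReal.ofNat_ne_top], one_mul] at this
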